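/- Among all 9-element subsets of ZMod 12, the maximum possible number of chords (3-element subsets with all pairwise differences in {3, 4, 5, 7, 8, 9} ⊆ ZMod 12) is exactly 15. -/

import Mathlib

set_option maxRecDepth 1000000
set_option maxHeartbeats 8000000

/-- The set of harmonic intervals in ZMod 12. -/
def harmonicSet : Finset (ZMod 12) := {3, 4, 5, 7, 8, 9}

/-- The number of 3-element subsets of S that are chords, i.e. whose elements are
pairwise at harmonic intervals. -/
def chordCount (S : Finset (ZMod 12)) : ℕ :=
  ((S.powersetCard 3).filter (fun c => ∀ x ∈ c, ∀ y ∈ c, x ≠ y → x - y ∈ harmonicSet)).card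

def allChords : Finset (Finset (ZMod 12)) :=
  {({0, 3, 7} : Finset (ZMod 12)), {0, 3, 8}, {0, 4, 7}, {0, 4, 8}, {0, 4, 9}, {0, 5, 8},
   {0, 5, 9}, {1, 4, 8}, {1, 4, 9}, {1, 5, 8}, {1, 5, 9}, {1, 5, 10}, {1, 6, 9}, {1, 6, 10},
   {2, 5, 9}, {2, 5, 10}, {2, 6, 9}, {2, 6, 10}, {2, 6, 11}, {2, 7, 10}, {2, 7, 11},
   {3, 6, 10}, {3, 6, 11}, {3, 7, 10}, {3, 7, 11}, {3, 8, 11}, {4, 7, 11}, {4, 8, 11}}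

lemma allChords_eq :
    allChords = ((Finset.univ : Finset (ZMod 12)).powersetCard 3).filter
      (fun c => ∀ x ∈ c, ∀ y ∈ c, x ≠ y → x - y ∈ harmonicSet) := by
  decide

lemma chordCount_eq (S : Finset (ZMod 12)) :
    chordCount S = (allChords.filter (fun c => c ⊆ S)).card := by
  rw [chordCount, allChords_eq, Finset.filter_filter]
  congr 1
  ext c
  simp only [Finset.mem_filter, Finset.mem_powersetCard, Finset.subset_univ, true_and]
  tauto

lemma key : ∀ a b c : ZMod 12, a ≠ b → a ≠ c → b ≠ c →
    (allChords.filter (fun ch => a ∉ ch ∧ b ∉ ch ∧ c ∉ ch)).card ≤ 15 := by decide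

/-- Among all 9-element subsets of ZMod 12, the maximum possible number
of chords is exactly 15. -/
theorem stmt_15 :
    IsGreatest {n : ℕ | ∃ S : Finset (ZMod 12), S.card = 9 ∧ chordCount S = n} 15 := by
  constructor
  · refine ⟨{0, 1, 2, 4, 5, 6, 8, 9, 10}, by decide, ?_⟩
    rw [chordCount_eq]; decide
  · rintro n ⟨S, h9, rfl⟩
    rw [chordCount_eq S]
    have hT : Sᶜ.card = 3 := by
      rw [Finset.card_compl, h9]; rfl
    obtain ⟨a, b, c, hab, hac, hbc, hT⟩ := Finset.card_eq_three.1 hT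
    have ha : a ∉ S := by
      have : a ∈ Sᶜ := hT ▸ by simp
      simpa using this
    have hb : b ∉ S := by
      have : b ∈ Sᶜ := hT ▸ by simp
      simpa using this
    have hc : c ∉ S := by
      have : c ∈ Sᶜ := hT ▸ by simp
      simpa using this
    refine le_trans (Finset.card_le_card (Finset.monotone_filter_right allChords ?_))
      (key a b c hab hac hbc)
    intro ch _ hch
    exact ⟨fun h => ha (hch h), fun h => hb (hch h), fun h => hc (hch h)⟩
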